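/- Let B be a C*-algebra. Then the set of maximally mixed functionals is a norm-closed subset of B*. -/

import Mathlib

open scoped ComplexOrder Pointwise

noncomputable section

variable (B : Type*) [NonUnitalCStarAlgebra B]

/-- `snd : Unitization ℂ B → B` as a continuous linear map. -/
def sndCLM : Unitization ℂ B →L[ℂ] B :=
  { Unitization.sndHom ℂ ℂ B with
    cont := continuous_snd.comp Unitization.uniformEquivProd.continuous }

/-- `inr : B → Unitization ℂ B` as a continuous linear map. -/
def inrCLM : B →L[ℂ] Unitization ℂ B :=
  { Unitization.inrHom ℂ ℂ B with cont := Unitization.continuous_inr }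

/-- The functional `uφv : x ↦ φ (u * x * v)` on `B`, for `u, v` in the minimal
unitization `B~ := Unitization ℂ B`.  The product `u * x * v` is computed in `B~`;
it lies in (the canonical image of) the ideal `B` there, and is evaluated by `φ`
via the projection `snd` onto `B`. -/
def conj2 (u v : Unitization ℂ B) (φ : B →L[ℂ] ℂ) : B →L[ℂ] ℂ :=
  ((φ.comp (sndCLM B)).comp
    (ContinuousLinearMap.mulLeftRight ℂ (Unitization ℂ B) u v)).comp (inrCLM B)

/-- The weak*-closure of a set of continuous linear functionals. -/
def wsClosureNU (S : Set (B →L[ℂ] ℂ)) : Set (B →L[ℂ] ℂ) :=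
  StrongDual.toWeakDual ⁻¹' closure (StrongDual.toWeakDual '' S)

/-- The Dixmier set `D_B(φ)` of a functional: the weak*-closed convex hull of the set
`{uφu* : u ∈ U(B~)}` of conjugates of `φ` by unitaries of the minimal unitization. -/
def DixNU (φ : B →L[ℂ] ℂ) : Set (B →L[ℂ] ℂ) :=
  wsClosureNU B (convexHull ℝ
    ((fun u : Unitization ℂ B => conj2 B u (star u) φ) ''
      (unitary (Unitization ℂ B) : Set (Unitization ℂ B))))

/-- A functional is maximally mixed if `φ ∈ D_B(ψ)` for every `ψ ∈ D_B(φ)`. -/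
def MaxMixedNU (φ : B →L[ℂ] ℂ) : Prop := ∀ ψ ∈ DixNU B φ, φ ∈ DixNU B ψ

/-- Positive functionals: `φ(x*x) ≥ 0` for all `x`. -/
def IsPosNU (φ : B →L[ℂ] ℂ) : Prop := ∀ x : B, 0 ≤ φ (star x * x)

lemma conj2_apply (u v : Unitization ℂ B) (φ : B →L[ℂ] ℂ) (x : B) :
    conj2 B u v φ x = φ ((u * x * v).snd) := by
  rfl

lemma conj2_sub (u v : Unitization ℂ B) (φ ψ : B →L[ℂ] ℂ) :
    conj2 B u v (φ - ψ) = conj2 B u v φ - conj2 B u v ψ := by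
  ext x; simp [conj2_apply]

lemma norm_conj2_le {u : Unitization ℂ B} (hu : u ∈ unitary (Unitization ℂ B))
    (φ : B →L[ℂ] ℂ) : ‖conj2 B u (star u) φ‖ ≤ ‖φ‖ := by
  refine ContinuousLinearMap.opNorm_le_bound _ (norm_nonneg φ) fun x => ?_
  rw [conj2_apply]
  have h0 : (u * (x : Unitization ℂ B) * star u).fst = 0 := by
    simp
  have hsnd : ‖(u * (x : Unitization ℂ B) * star u).snd‖ = ‖u * (x : Unitization ℂ B) * star u‖ := by
    rw [← Unitization.norm_inr (𝕜 := ℂ)]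
    congr 1
    ext
    · simp [h0]
    · simp
  calc ‖φ ((u * (x : Unitization ℂ B) * star u).snd)‖
      ≤ ‖φ‖ * ‖(u * (x : Unitization ℂ B) * star u).snd‖ := φ.le_opNorm _
    _ = ‖φ‖ * ‖u * (x : Unitization ℂ B) * star u‖ := by rw [hsnd]
    _ = ‖φ‖ * ‖x‖ := by
        rw [mul_assoc, CStarRing.norm_mem_unitary_mul _ hu,
          CStarRing.norm_mul_mem_unitary _ (Unitary.star_mem hu), Unitization.norm_inr]

lemma dix_isClosed (φ : B →L[ℂ] ℂ) : IsClosed (DixNU B φ) :=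
  isClosed_closure.preimage NormedSpace.Dual.toWeakDual_continuous

lemma dix_shift (φ φ' : B →L[ℂ] ℂ) :
    DixNU B φ ⊆ DixNU B φ' + Metric.closedBall 0 ‖φ - φ'‖ := by
  set r := ‖φ - φ'‖ with hr
  set K : Set (B →L[ℂ] ℂ) := Metric.closedBall 0 r with hK
  set A := (fun u : Unitization ℂ B => conj2 B u (star u) φ) ''
      (unitary (Unitization ℂ B) : Set (Unitization ℂ B)) with hA
  set A' := (fun u : Unitization ℂ B => conj2 B u (star u) φ') ''
      (unitary (Unitization ℂ B) : Set (Unitization ℂ B)) with hA'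
  -- Step 1: each conjugate of φ is within r of the corresponding conjugate of φ'
  have step1 : A ⊆ convexHull ℝ A' + K := by
    rintro _ ⟨u, hu, rfl⟩
    refine ⟨conj2 B u (star u) φ', subset_convexHull ℝ _ ⟨u, hu, rfl⟩,
      conj2 B u (star u) φ - conj2 B u (star u) φ', ?_, ?_⟩
    swap
    · show conj2 B u (star u) φ' + (conj2 B u (star u) φ - conj2 B u (star u) φ') = _
      rw [add_comm, sub_add_cancel]
    rw [hK, Metric.mem_closedBall, dist_zero_right, ← conj2_sub]
    exact norm_conj2_le B hu _
  -- Step 2: convex hulls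
  have step2 : convexHull ℝ A ⊆ convexHull ℝ A' + K :=
    convexHull_min step1 ((convex_convexHull ℝ A').add (convex_closedBall 0 r))
  -- Step 3: weak* closures, using Banach-Alaoglu
  set T : (B →L[ℂ] ℂ) ≃ₗ[ℂ] WeakDual ℂ B := StrongDual.toWeakDual with hT
  have hTK : (T '' K : Set (WeakDual ℂ B)) = WeakDual.toStrongDual ⁻¹' K := by
    ext x
    constructor
    · rintro ⟨k, hk, rfl⟩; exact hk
    · intro hx; exact ⟨WeakDual.toStrongDual x, hx, rfl⟩
  have hKcpt : IsCompact (T '' K : Set (WeakDual ℂ B)) := by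
    rw [hTK]; exact WeakDual.isCompact_closedBall (𝕜 := ℂ) (E := B) 0 r
  have hclosed : IsClosed (closure (T '' convexHull ℝ A') + T '' K) :=
    IsClosed.add_right_of_isCompact isClosed_closure hKcpt
  have hsub : T '' convexHull ℝ A ⊆ closure (T '' convexHull ℝ A') + T '' K := by
    rintro _ ⟨a, ha, rfl⟩
    obtain ⟨a', ha', k, hk, hak⟩ := step2 ha
    have hak' : a' + k = a := hak
    refine ⟨T a', subset_closure ⟨a', ha', rfl⟩, T k, ⟨k, hk, rfl⟩, ?_⟩
    show T a' + T k = T a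
    rw [← map_add, hak']
  have step3 : closure (T '' convexHull ℝ A) ⊆ closure (T '' convexHull ℝ A') + T '' K :=
    hclosed.closure_subset_iff.mpr hsub
  -- Conclude
  intro χ hχ
  obtain ⟨y, hy, _, ⟨k, hk, rfl⟩, hsum0⟩ := step3 hχ
  have hsum : y + T k = T χ := hsum0
  refine ⟨WeakDual.toStrongDual y, ?_, k, hk, ?_⟩
  · show T (WeakDual.toStrongDual y) ∈ closure (T '' convexHull ℝ A')
    exact hy
  · have : T (WeakDual.toStrongDual y + k) = T χ := by
      rw [map_add]; exact hsum
    exact T.injective this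

/-- For a C*-algebra `B`, the set of maximally mixed functionals is a
norm-closed subset of `B*` (the dual carries its norm topology by default). -/
theorem stmt3 (B : Type*) [NonUnitalCStarAlgebra B] :
    IsClosed {φ : B →L[ℂ] ℂ | MaxMixedNU B φ} := by
  refine isClosed_of_closure_subset fun φ hφ => ?_
  intro ψ hψ
  refine (dix_isClosed B ψ).closure_subset ?_
  rw [Metric.mem_closure_iff]
  intro ε hε
  obtain ⟨φ', hφ'mm, hdist⟩ := Metric.mem_closure_iff.mp hφ (ε / 3) (by linarith)
  have hδ : ‖φ - φ'‖ < ε / 3 := by rwa [← dist_eq_norm]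
  -- ψ ∈ D(φ) ⊆ D(φ') + ball
  obtain ⟨ψ', hψ', e, he, hsum0⟩ := dix_shift B φ φ' hψ
  have hsum : ψ' + e = ψ := hsum0
  rw [Metric.mem_closedBall, dist_zero_right] at he
  -- φ' ∈ D(ψ') ⊆ D(ψ) + ball
  have h1 : φ' ∈ DixNU B ψ' := hφ'mm ψ' hψ'
  obtain ⟨χ, hχ, e', he', hsum0'⟩ := dix_shift B ψ' ψ h1
  have hsum' : χ + e' = φ' := hsum0'
  rw [Metric.mem_closedBall, dist_zero_right] at he'
  have hψψ' : ‖ψ' - ψ‖ ≤ ‖φ - φ'‖ := by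
    have : ψ' - ψ = -e := by rw [← hsum]; abel
    rw [this, norm_neg]; exact he
  refine ⟨χ, hχ, ?_⟩
  calc dist φ χ ≤ dist φ φ' + dist φ' χ := dist_triangle _ _ _
    _ = dist φ φ' + ‖e'‖ := by
        rw [← hsum']
        congr 1
        rw [dist_eq_norm, add_sub_cancel_left]
    _ < ε / 3 + ε / 3 := by
        have : ‖e'‖ < ε / 3 := lt_of_le_of_lt (he'.trans hψψ') hδ
        exact add_lt_add hdist this
    _ < ε := by linarith
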